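/- arXiv:2008.11926 — 3 statements merged into one kernel-verified Lean document; each statement's English description precedes it below -/
import Mathlib

section
/- Let G be a compact Hausdorff topological group acting continuously on a Hausdorff topological space M, let H be a subgroup of G, and let p ∈ M. Then the orbit of p under the topological closure of H equals the topological closure in M of the orbit of p under H: O_{cl(H)}(p) = cl(O_H(p)). -/
/-- For a continuous action of a compact Hausdorff topological group `G` on a
Hausdorff space `M`, a subgroup `H ≤ G` and `p ∈ M`, the orbit of `p` under the closure of `H`
equals the closure of the orbit of `p` under `H`. -/
theorem stmt_2 {G : Type*} [Group G] [TopologicalSpace G] [IsTopologicalGroup G]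
    [CompactSpace G] [T2Space G]
    {M : Type*} [TopologicalSpace M] [T2Space M] [MulAction G M] [ContinuousSMul G M]
    (H : Subgroup G) (p : M) :
    MulAction.orbit H.topologicalClosure p = closure (MulAction.orbit H p) := by
  have hf : Continuous (fun g : G => g • p) := continuous_id.smul continuous_const
  have horb : ∀ (K : Subgroup G),
      MulAction.orbit K p = (fun g : G => g • p) '' (K : Set G) := by
    intro K
    ext x
    constructor
    · rintro ⟨⟨g, hg⟩, rfl⟩
      exact ⟨g, hg, rfl⟩
    · rintro ⟨g, hg, rfl⟩
      exact ⟨⟨g, hg⟩, rfl⟩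
  rw [horb, horb]
  have hcl : (H.topologicalClosure : Set G) = closure (H : Set G) := rfl
  rw [hcl]
  apply le_antisymm
  · exact (image_closure_subset_closure_image hf)
  · have hcomp : IsCompact (closure (H : Set G)) := isClosed_closure.isCompact
    have : IsClosed ((fun g : G => g • p) '' closure (H : Set G)) :=
      (hcomp.image hf).isClosed
    exact closure_minimal (Set.image_mono subset_closure) this
end

section
/- Let G be a compact Hausdorff topological group acting continuously on a Hausdorff topological space M, let H be a subgroup of G, and let p ∈ M. Then for every point q in the orbit of p under the topological closure of H, the orbit of q under H is dense in the orbit of p under the closure of H; that is, cl(O_H(q)) = O_{cl(H)}(p) for every q ∈ O_{cl(H)}(p). -/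
/-- For a continuous action of a compact Hausdorff topological group `G` on a
Hausdorff space `M`, a subgroup `H ≤ G` and `p ∈ M`: for every `q` in the orbit of `p` under
the closure of `H`, the `H`-orbit of `q` is dense in the `cl(H)`-orbit of `p`. -/
theorem stmt_3 {G : Type*} [Group G] [TopologicalSpace G] [IsTopologicalGroup G]
    [CompactSpace G] [T2Space G]
    {M : Type*} [TopologicalSpace M] [T2Space M] [MulAction G M] [ContinuousSMul G M]
    (H : Subgroup G) (p : M) :
    ∀ q ∈ MulAction.orbit H.topologicalClosure p,
      closure (MulAction.orbit H q) = MulAction.orbit H.topologicalClosure p := by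
  rintro q ⟨g, rfl⟩
  have horb : MulAction.orbit H.topologicalClosure p
      = (fun x : G => x • p) '' (H.topologicalClosure : Set G) := by
    ext x
    constructor
    · rintro ⟨k, rfl⟩; exact ⟨(k : G), k.2, rfl⟩
    · rintro ⟨k, hk, rfl⟩; exact ⟨⟨k, hk⟩, rfl⟩
  apply subset_antisymm
  · apply closure_minimal
    · rintro x ⟨h, rfl⟩
      refine ⟨⟨(h : G) * (g : G), mul_mem (H.le_topologicalClosure h.2) g.2⟩, ?_⟩
      simp [mul_smul, Subgroup.smul_def]
    · rw [horb]
      exact (((isClosed_closure (s := (H : Set G))).isCompact).image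
        (continuous_id.smul continuous_const)).isClosed
  · rintro x ⟨k, rfl⟩
    have hk : (k : G) * (g : G)⁻¹ ∈ closure (H : Set G) :=
      mul_mem k.2 (inv_mem g.2)
    have heq : (k : G) • p = ((k : G) * (g : G)⁻¹) • ((g : G) • p) := by
      rw [smul_smul, inv_mul_cancel_right]
    show (k : G) • p ∈ closure (MulAction.orbit H ((g : G) • p))
    rw [heq]
    refine map_mem_closure (f := fun x : G => x • ((g : G) • p))
      (continuous_id.smul continuous_const) hk ?_
    rintro y hy
    exact ⟨⟨y, hy⟩, rfl⟩
end

section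
/- Let G be a compact Hausdorff topological group acting continuously on a Hausdorff topological space M, and let H be a subgroup of G. If some point p ∈ M has H-orbit dense in M, then the topological closure of H acts transitively on M; in particular the orbit of p under cl(H) is all of M. -/
/-- For a continuous action of a compact Hausdorff topological group `G` on a
Hausdorff space `M` and a subgroup `H ≤ G`: if the `H`-orbit of some point `p` is dense in
`M`, then the closure of `H` acts transitively on `M`; in particular the orbit of `p` under
`cl(H)` is all of `M`. -/
theorem stmt_8 {G : Type*} [Group G] [TopologicalSpace G] [IsTopologicalGroup G]
    [CompactSpace G] [T2Space G]
    {M : Type*} [TopologicalSpace M] [T2Space M] [MulAction G M] [ContinuousSMul G M]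
    (H : Subgroup G) (p : M)
    (hdense : Dense (MulAction.orbit H p)) :
    (∀ x y : M, ∃ g ∈ H.topologicalClosure, g • x = y) ∧
      MulAction.orbit H.topologicalClosure p = Set.univ := by
  have himg : (fun g : G => g • p) '' (H.topologicalClosure : Set G)
      = MulAction.orbit H.topologicalClosure p := by
    ext x
    constructor
    · rintro ⟨g, hg, rfl⟩
      exact ⟨⟨g, hg⟩, rfl⟩
    · rintro ⟨⟨g, hg⟩, rfl⟩
      exact ⟨g, hg, rfl⟩
  have hcpt : IsCompact ((H.topologicalClosure : Set G)) :=
    isClosed_closure.isCompact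
  have hcont : Continuous fun g : G => g • p := continuous_id.smul continuous_const
  have hclosed : IsClosed (MulAction.orbit H.topologicalClosure p) := by
    rw [← himg]
    exact (hcpt.image hcont).isClosed
  have hsub : MulAction.orbit H p ⊆ MulAction.orbit H.topologicalClosure p := by
    rintro x ⟨⟨g, hg⟩, rfl⟩
    exact ⟨⟨g, subset_closure hg⟩, rfl⟩
  have huniv : MulAction.orbit H.topologicalClosure p = Set.univ := by
    apply Set.eq_univ_of_univ_subset
    calc Set.univ = closure (MulAction.orbit H p) := hdense.closure_eq.symm
      _ ⊆ closure (MulAction.orbit H.topologicalClosure p) := closure_mono hsub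
      _ = MulAction.orbit H.topologicalClosure p := hclosed.closure_eq
  refine ⟨fun x y => ?_, huniv⟩
  have hx : x ∈ MulAction.orbit H.topologicalClosure p := huniv ▸ Set.mem_univ x
  have hy : y ∈ MulAction.orbit H.topologicalClosure p := huniv ▸ Set.mem_univ y
  obtain ⟨⟨g, hg⟩, rfl⟩ := hx
  obtain ⟨⟨h, hh⟩, rfl⟩ := hy
  exact ⟨h * g⁻¹, H.topologicalClosure.mul_mem hh (H.topologicalClosure.inv_mem hg),
    by simp [mul_smul]⟩
end
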